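/- (Adequacy.) Let P be a program and suppose ⊢ P : M in the deterministic calculus, with M an n×n matrix over {0,1,2}^p → mwp^∞. Then for every assignment a ∈ {0,1,2}^p, the judgement ⊢_JK P : M[a] is derivable in the original Jones–Kristiansen calculus if and only if no entry of the mwp^∞-matrix M[a] equals ∞. -/

import Mathlib

/-! ## The mwp^∞ semi-ring -/

/-- The carrier of the mwp^∞ semi-ring: `{0, m, w, p, ∞}`. -/
inductive MwpI : Type
  | zero | m | w | p | inf
  deriving DecidableEq

instance instFintypeMwpI : Fintype MwpI where
  elems := ⟨↑[MwpI.zero, MwpI.m, MwpI.w, MwpI.p, MwpI.inf], by decide⟩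
  complete := by intro x; cases x <;> decide

/-- The position of an element in the linear order `0 < m < w < p < ∞`. -/
def MwpI.toNat : MwpI → ℕ
  | .zero => 0
  | .m => 1
  | .w => 2
  | .p => 3
  | .inf => 4

/-- mwp^∞ addition: `α +^∞ β = max (α, β)`. -/
def MwpI.add (a b : MwpI) : MwpI := if a.toNat ≤ b.toNat then b else a

/-- mwp^∞ multiplication: `α ×^∞ β = 0` if `α, β ≠ ∞` and (`α = 0` or `β = 0`),
and `max (α, β)` otherwise. -/
def MwpI.mul (a b : MwpI) : MwpI :=
  if a ≠ MwpI.inf ∧ b ≠ MwpI.inf ∧ (a = MwpI.zero ∨ b = MwpI.zero) then MwpI.zero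
  else a.add b

instance : Zero MwpI := ⟨MwpI.zero⟩
instance : Add MwpI := ⟨MwpI.add⟩

/-- mwp^∞ addition (max) is a commutative monoid with unit `0`. -/
instance : AddCommMonoid MwpI where
  add_assoc := by decide
  zero_add := by decide
  add_zero := by decide
  add_comm := by decide
  nsmul := nsmulRec
  nsmul_zero := fun _ => rfl
  nsmul_succ := fun _ _ => rfl

/-! ## The imperative language -/

/-- Expressions: `e ::= Xi | Xi + Xj | Xi − Xj | Xi * Xj` over `n` variables. -/
inductive Expr (n : ℕ) : Type
  | var (i : Fin n)
  | add (i j : Fin n)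
  | sub (i j : Fin n)
  | mul (i j : Fin n)

/-- Commands: `C ::= Xj = e | if b then C1 else C2 | while b do {C} | loop Xl {C} | C1;C2`
over `n` variables (boolean conditions `b` are ignored by the analysis).
A program is a sequence of commands, built with `seq`. -/
inductive Cmd (n : ℕ) : Type
  | assign (j : Fin n) (e : Expr n)
  | ifte (c₁ c₂ : Cmd n)
  | whl (c : Cmd n)
  | loop (l : Fin n) (c : Cmd n)
  | seq (c₁ c₂ : Cmd n)

/-! ## Matrices over the pointwise function semiring `{0,1,2}^p → mwp^∞` -/

/-- Coefficients: elements of the pointwise function semiring `{0,1,2}^p → mwp^∞`. -/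
abbrev Coef (p : ℕ) : Type := (Fin p → Fin 3) → MwpI

/-- `n × n` matrices with entries in `{0,1,2}^p → mwp^∞`. -/
abbrev Mat (n p : ℕ) : Type := Fin n → Fin n → Coef p

/-- `n`-vectors with entries in `{0,1,2}^p → mwp^∞`. -/
abbrev Vec (n p : ℕ) : Type := Fin n → Coef p

/-- The matrix product `M ⊗ N` (pointwise in the choice assignments). -/
def matMul {n p : ℕ} (M N : Mat n p) : Mat n p :=
  fun i j => ∑ k : Fin n, fun a => MwpI.mul (M i k a) (N k j a)

/-- The identity matrix (`m` on the diagonal, `0` elsewhere). -/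
def matId {n p : ℕ} : Mat n p :=
  fun i j => fun _ => if i = j then MwpI.m else MwpI.zero

/-- Matrix powers: `M⁰ = 1`, `M^(k+1) = M ⊗ M^k`. -/
def matPow {n p : ℕ} (M : Mat n p) : ℕ → Mat n p
  | 0 => matId
  | k + 1 => matMul M (matPow M k)

/-- The partial sum `1 ⊕ M ⊕ M² ⊕ … ⊕ M^N` of the closure. -/
def partialSum {n p : ℕ} (M : Mat n p) (N : ℕ) : Mat n p :=
  ∑ k ∈ Finset.range (N + 1), matPow M k

/-- `Ms` is the closure `M* = 1 ⊕ M ⊕ M² ⊕ …` of `M`: since addition is idempotent, the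
increasing sequence of partial sums stabilizes, and `M*` is the stable value. -/
def IsClosure {n p : ℕ} (M Ms : Mat n p) : Prop :=
  ∃ N, Ms = partialSum M N ∧ partialSum M (N + 1) = partialSum M N

/-- Reindexing a coefficient on the first `p₁` choices of `p₁ + p₂` choices. -/
def liftL {p₁ p₂ : ℕ} (f : Coef p₁) : Coef (p₁ + p₂) :=
  fun a => f fun i => a (Fin.castAdd p₂ i)

/-- Reindexing a coefficient on the last `p₂` choices of `p₁ + p₂` choices. -/
def liftR {p₁ p₂ : ℕ} (f : Coef p₂) : Coef (p₁ + p₂) :=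
  fun a => f fun i => a (Fin.natAdd p₁ i)

/-- Reindexing a matrix on the first `p₁` choices of `p₁ + p₂` choices. -/
def matLiftL {n p₁ p₂ : ℕ} (M : Mat n p₁) : Mat n (p₁ + p₂) := fun i j => liftL (M i j)

/-- Reindexing a matrix on the last `p₂` choices of `p₁ + p₂` choices. -/
def matLiftR {n p₁ p₂ : ℕ} (M : Mat n p₂) : Mat n (p₁ + p₂) := fun i j => liftR (M i j)

/-! ## The deterministic flow calculus -/

/-- The coefficient at row `i` of the vector assigned by rule `E^A`:
choice `0 ↦ m`, `1 ↦ p`, `2 ↦ w`. -/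
def eaLo (x : Fin 3) : MwpI := if x = 0 then MwpI.m else if x = 1 then MwpI.p else MwpI.w

/-- The coefficient at row `j` of the vector assigned by rule `E^A`:
choice `0 ↦ p`, `1 ↦ m`, `2 ↦ w`. -/
def eaHi (x : Fin 3) : MwpI := if x = 0 then MwpI.p else if x = 1 then MwpI.m else MwpI.w

/-- The vector assigned by rule `E^A` to `Xi ⋆ Xj` (`⋆ ∈ {+,−}`), with one choice index:
choice `0 ↦ {m at i, p at j}`, `1 ↦ {p at i, m at j}`, `2 ↦ {w at i, w at j}`. -/
def eaVec {n : ℕ} (i j : Fin n) : Vec n 1 :=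
  fun r a =>
    MwpI.add (if r = i then eaLo (a 0) else MwpI.zero)
      (if r = j then eaHi (a 0) else MwpI.zero)

/-- The vector assigned by rule `E^S` to `Xi`: `m` at row `i`, `0` elsewhere. -/
def esVec {n : ℕ} (i : Fin n) : Vec n 0 :=
  fun r => fun _ => if r = i then MwpI.m else MwpI.zero

/-- The vector assigned by rule `E^M` to `Xi * Xj`: `w` at rows `i` and `j`, `0` elsewhere. -/
def emVec {n : ℕ} (i j : Fin n) : Vec n 0 :=
  fun r => fun _ =>
    MwpI.add (if r = i then MwpI.w else MwpI.zero) (if r = j then MwpI.w else MwpI.zero)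

/-- The identity matrix with column `j` replaced by the vector `V` (rule `A`). -/
def assignMat {n p : ℕ} (j : Fin n) (V : Vec n p) : Mat n p :=
  fun r c =>
    if c = j then V r else fun _ => if r = c then MwpI.m else MwpI.zero

/-- The matrix assigned by rule `L^∞` to `loop Xl {C}` from the closure `Ms = M*`:
`M* ⊕ {∞ at (j,j) whenever M*ⱼⱼ ≠ m} ⊕ {p at (l,j) whenever M*ᵢⱼ = p for some i}`. -/
def loopOut {n p : ℕ} (l : Fin n) (Ms : Mat n p) : Mat n p :=
  fun i j a =>
    MwpI.add
      (MwpI.add (Ms i j a)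
        (if i = j ∧ Ms j j a ≠ MwpI.m then MwpI.inf else MwpI.zero))
      (if i = l ∧ (∃ i', Ms i' j a = MwpI.p) then MwpI.p else MwpI.zero)

/-- The matrix assigned by rule `W^∞` to `while b do {C}` from the closure `Ms = M*`:
`M* ⊕ {∞ at (j,j) whenever M*ⱼⱼ ≠ m} ⊕ {∞ at (i,j) whenever M*ᵢⱼ = p}`. -/
def whileOut {n p : ℕ} (Ms : Mat n p) : Mat n p :=
  fun i j a =>
    MwpI.add
      (MwpI.add (Ms i j a)
        (if i = j ∧ Ms j j a ≠ MwpI.m then MwpI.inf else MwpI.zero))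
      (if Ms i j a = MwpI.p then MwpI.inf else MwpI.zero)

/-- The deterministic calculus for expressions: `⊢ e : V`, with `p` choice indexes. -/
inductive EDeriv {n : ℕ} : Expr n → (p : ℕ) → Vec n p → Prop
  | var (i : Fin n) : EDeriv (.var i) 0 (esVec i)
  | mul (i j : Fin n) : EDeriv (.mul i j) 0 (emVec i j)
  | add (i j : Fin n) : EDeriv (.add i j) 1 (eaVec i j)
  | sub (i j : Fin n) : EDeriv (.sub i j) 1 (eaVec i j)

/-- The deterministic calculus for commands: `⊢ C : M`, with `p` choice indexes;
sequential composition and conditionals concatenate the choice indexes of their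
components (the first component's choices coming first). -/
inductive Deriv {n : ℕ} : Cmd n → (p : ℕ) → Mat n p → Prop
  | assign {e : Expr n} {p : ℕ} {V : Vec n p} (j : Fin n) :
      EDeriv e p V → Deriv (.assign j e) p (assignMat j V)
  | seq {c₁ c₂ : Cmd n} {p₁ p₂ : ℕ} {M₁ : Mat n p₁} {M₂ : Mat n p₂} :
      Deriv c₁ p₁ M₁ → Deriv c₂ p₂ M₂ →
      Deriv (.seq c₁ c₂) (p₁ + p₂) (matMul (matLiftL M₁) (matLiftR M₂))
  | ifte {c₁ c₂ : Cmd n} {p₁ p₂ : ℕ} {M₁ : Mat n p₁} {M₂ : Mat n p₂} :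
      Deriv c₁ p₁ M₁ → Deriv c₂ p₂ M₂ →
      Deriv (.ifte c₁ c₂) (p₁ + p₂) (matLiftL M₁ + matLiftR M₂)
  | loop {c : Cmd n} {p : ℕ} {M Ms : Mat n p} (l : Fin n) :
      Deriv c p M → IsClosure M Ms → Deriv (.loop l c) p (loopOut l Ms)
  | whl {c : Cmd n} {p : ℕ} {M Ms : Mat n p} :
      Deriv c p M → IsClosure M Ms → Deriv (.whl c) p (whileOut Ms)

/-! ## Evaluation of a matrix at an assignment -/

/-- Evaluating a matrix `M` over `{0,1,2}^p → mwp^∞` at an assignment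
`a ∈ {0,1,2}^p` yields the mwp^∞-matrix `M[a]` (entrywise application). -/
def evalMat {n p : ℕ} (M : Mat n p) (a : Fin p → Fin 3) : Fin n → Fin n → MwpI :=
  fun i j => M i j a

/-! ## The original (Jones–Kristiansen) nondeterministic calculus -/

/-- `n × n` matrices over mwp^∞ (the original calculus only ever produces
`∞`-free matrices, i.e. matrices over mwp). -/
abbrev SMat (n : ℕ) : Type := Fin n → Fin n → MwpI

/-- `n`-vectors over mwp^∞. -/
abbrev SVec (n : ℕ) : Type := Fin n → MwpI

/-- Matrix product. -/
def smatMul {n : ℕ} (M N : SMat n) : SMat n :=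
  fun i j => ∑ k : Fin n, MwpI.mul (M i k) (N k j)

/-- The identity matrix. -/
def smatId {n : ℕ} : SMat n := fun i j => if i = j then MwpI.m else MwpI.zero

/-- Matrix powers. -/
def smatPow {n : ℕ} (M : SMat n) : ℕ → SMat n
  | 0 => smatId
  | k + 1 => smatMul M (smatPow M k)

/-- The partial sum `1 ⊕ M ⊕ M² ⊕ … ⊕ M^N` of the closure. -/
def spartialSum {n : ℕ} (M : SMat n) (N : ℕ) : SMat n :=
  ∑ k ∈ Finset.range (N + 1), smatPow M k

/-- `Ms` is the closure `M* = 1 ⊕ M ⊕ M² ⊕ …` of `M`. -/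
def SIsClosure {n : ℕ} (M Ms : SMat n) : Prop :=
  ∃ N, Ms = spartialSum M N ∧ spartialSum M (N + 1) = spartialSum M N

/-- Whether variable `Xr` occurs in the expression `e`. -/
def occursIn {n : ℕ} : Expr n → Fin n → Bool
  | .var i, r => decide (r = i)
  | .add i j, r => decide (r = i ∨ r = j)
  | .sub i j, r => decide (r = i ∨ r = j)
  | .mul i j, r => decide (r = i ∨ r = j)

/-- The vector assigned by rule `E2`: `w` at each row `r` such that `Xr` occurs in `e`. -/
def e2Vec {n : ℕ} (e : Expr n) : SVec n :=
  fun r => if occursIn e r then MwpI.w else MwpI.zero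

/-- The scalar product `pV`. -/
def pSmul {n : ℕ} (V : SVec n) : SVec n := fun r => MwpI.mul MwpI.p (V r)

/-- The identity matrix with column `j` replaced by the vector `V` (rule `A`). -/
def sAssignMat {n : ℕ} (j : Fin n) (V : SVec n) : SMat n :=
  fun r c => if c = j then V r else if r = c then MwpI.m else MwpI.zero

/-- The original nondeterministic calculus for expressions:
`⊢_JK e : V` (rules `E1`–`E4`). -/
inductive JKE {n : ℕ} : Expr n → SVec n → Prop
  | e1 (i : Fin n) : JKE (.var i) (fun r => if r = i then MwpI.m else MwpI.zero)
  | e2 (e : Expr n) : JKE e (e2Vec e)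
  | e3add {i j : Fin n} {V₁ V₂ : SVec n} :
      JKE (.var i) V₁ → JKE (.var j) V₂ → JKE (.add i j) (pSmul V₁ + V₂)
  | e3sub {i j : Fin n} {V₁ V₂ : SVec n} :
      JKE (.var i) V₁ → JKE (.var j) V₂ → JKE (.sub i j) (pSmul V₁ + V₂)
  | e4add {i j : Fin n} {V₁ V₂ : SVec n} :
      JKE (.var i) V₁ → JKE (.var j) V₂ → JKE (.add i j) (V₁ + pSmul V₂)
  | e4sub {i j : Fin n} {V₁ V₂ : SVec n} :
      JKE (.var i) V₁ → JKE (.var j) V₂ → JKE (.sub i j) (V₁ + pSmul V₂)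

/-- The original nondeterministic calculus for commands: `⊢_JK C : M`
(rules `A`, `C`, `I`, `L`, `W`, with their side conditions). -/
inductive JKC {n : ℕ} : Cmd n → SMat n → Prop
  | assign {e : Expr n} {V : SVec n} (j : Fin n) :
      JKE e V → JKC (.assign j e) (sAssignMat j V)
  | seq {c₁ c₂ : Cmd n} {M₁ M₂ : SMat n} :
      JKC c₁ M₁ → JKC c₂ M₂ → JKC (.seq c₁ c₂) (smatMul M₁ M₂)
  | ifte {c₁ c₂ : Cmd n} {M₁ M₂ : SMat n} :
      JKC c₁ M₁ → JKC c₂ M₂ → JKC (.ifte c₁ c₂) (M₁ + M₂)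
  | loop {c : Cmd n} {M Ms : SMat n} (l : Fin n) :
      JKC c M → SIsClosure M Ms → (∀ i, Ms i i = MwpI.m) →
      JKC (.loop l c)
        (fun i j =>
          MwpI.add (Ms i j)
            (if i = l ∧ (∃ i', Ms i' j = MwpI.p) then MwpI.p else MwpI.zero))
  | whl {c : Cmd n} {M Ms : SMat n} :
      JKC c M → SIsClosure M Ms → (∀ i, Ms i i = MwpI.m) →
      (∀ i j, Ms i j ≠ MwpI.p) → JKC (.whl c) Ms

/-! ## Auxiliary lemmas -/

section Aux

lemma MwpI.add_def (x y : MwpI) : x + y = MwpI.add x y := rfl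

lemma MwpI.add_inf_iff : ∀ x y : MwpI, MwpI.add x y = MwpI.inf ↔ x = MwpI.inf ∨ y = MwpI.inf := by
  decide

lemma MwpI.mul_inf_iff : ∀ x y : MwpI, MwpI.mul x y = MwpI.inf ↔ x = MwpI.inf ∨ y = MwpI.inf := by
  decide

lemma MwpI.add_zero' : ∀ x : MwpI, MwpI.add x MwpI.zero = x := by decide

lemma MwpI.add_add_inf : ∀ x y : MwpI, MwpI.add (MwpI.add x MwpI.inf) y = MwpI.inf := by decide

lemma MwpI.add_inf_left : ∀ x y : MwpI, MwpI.add (MwpI.add MwpI.inf x) y = MwpI.inf := by decide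

lemma MwpI.add_inf_right : ∀ x y : MwpI, MwpI.add (MwpI.add x y) MwpI.inf = MwpI.inf := by decide

lemma MwpI.mul_inf_left : ∀ x : MwpI, MwpI.mul MwpI.inf x = MwpI.inf := by decide

lemma MwpI.mul_inf_right : ∀ x : MwpI, MwpI.mul x MwpI.inf = MwpI.inf := by decide

lemma sum_ne_inf {ι : Type*} {s : Finset ι} {f : ι → MwpI}
    (h : ∀ i ∈ s, f i ≠ MwpI.inf) : ∑ i ∈ s, f i ≠ MwpI.inf := by
  classical
  induction s using Finset.cons_induction with
  | empty => simp only [Finset.sum_empty]; decide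
  | cons k s hk ih =>
    rw [Finset.sum_cons, MwpI.add_def, Ne, MwpI.add_inf_iff]
    push_neg
    exact ⟨h k (Finset.mem_cons_self k s), ih fun i hi => h i (Finset.mem_cons_of_mem hi)⟩

lemma sum_eq_inf {ι : Type*} {s : Finset ι} {f : ι → MwpI} {k : ι}
    (hk : k ∈ s) (hfk : f k = MwpI.inf) : ∑ i ∈ s, f i = MwpI.inf := by
  classical
  rw [← Finset.add_sum_erase _ _ hk, hfk, MwpI.add_def, MwpI.add_inf_iff]
  exact Or.inl rfl

/-! ### No `∞` in JK derivations -/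

lemma jke_noinf {n : ℕ} {e : Expr n} {V : SVec n} (h : JKE e V) :
    ∀ r, V r ≠ MwpI.inf := by
  induction h with
  | e1 i => intro r; dsimp; split <;> decide
  | e2 e => intro r; unfold e2Vec; split <;> decide
  | e3add h1 h2 ih1 ih2 | e3sub h1 h2 ih1 ih2 =>
    intro r
    show MwpI.add (pSmul _ r) _ ≠ MwpI.inf
    rw [Ne, MwpI.add_inf_iff]
    push_neg
    refine ⟨?_, ih2 r⟩
    unfold pSmul
    rw [Ne, MwpI.mul_inf_iff]
    push_neg
    exact ⟨by decide, ih1 r⟩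
  | e4add h1 h2 ih1 ih2 | e4sub h1 h2 ih1 ih2 =>
    intro r
    show MwpI.add _ (pSmul _ r) ≠ MwpI.inf
    rw [Ne, MwpI.add_inf_iff]
    push_neg
    refine ⟨ih1 r, ?_⟩
    unfold pSmul
    rw [Ne, MwpI.mul_inf_iff]
    push_neg
    exact ⟨by decide, ih2 r⟩

lemma smatMul_noinf {n : ℕ} {A B : SMat n}
    (hA : ∀ i j, A i j ≠ MwpI.inf) (hB : ∀ i j, B i j ≠ MwpI.inf) :
    ∀ i j, smatMul A B i j ≠ MwpI.inf := by
  intro i j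
  unfold smatMul
  refine sum_ne_inf fun k _ => ?_
  rw [Ne, MwpI.mul_inf_iff]
  push_neg
  exact ⟨hA i k, hB k j⟩

lemma smatId_noinf {n : ℕ} : ∀ i j : Fin n, smatId i j ≠ MwpI.inf := by
  intro i j; unfold smatId; split <;> decide

lemma smatPow_noinf {n : ℕ} {A : SMat n} (hA : ∀ i j, A i j ≠ MwpI.inf) :
    ∀ k, ∀ i j, smatPow A k i j ≠ MwpI.inf := by
  intro k
  induction k with
  | zero => exact smatId_noinf
  | succ k ih => exact smatMul_noinf hA ih

lemma spartialSum_apply {n : ℕ} (A : SMat n) (N : ℕ) (i j : Fin n) :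
    spartialSum A N i j = ∑ k ∈ Finset.range (N + 1), smatPow A k i j := by
  unfold spartialSum
  rw [Finset.sum_apply, Finset.sum_apply]

lemma spartialSum_noinf {n : ℕ} {A : SMat n} (hA : ∀ i j, A i j ≠ MwpI.inf) (N : ℕ) :
    ∀ i j, spartialSum A N i j ≠ MwpI.inf := by
  intro i j
  rw [spartialSum_apply]
  exact sum_ne_inf fun k _ => smatPow_noinf hA k i j

lemma closure_noinf {n : ℕ} {A As : SMat n} (h : SIsClosure A As)
    (hA : ∀ i j, A i j ≠ MwpI.inf) : ∀ i j, As i j ≠ MwpI.inf := by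
  obtain ⟨N, h1, _⟩ := h
  rw [h1]
  exact spartialSum_noinf hA N

lemma closure_noinf_rev {n : ℕ} {A As : SMat n} (h : SIsClosure A As)
    (hAs : ∀ i j, As i j ≠ MwpI.inf) : ∀ i j, A i j ≠ MwpI.inf := by
  obtain ⟨N, h1, h2⟩ := h
  intro i j hij
  apply hAs i j
  rw [h1, ← h2, spartialSum_apply]
  have hpow : smatPow A 1 i j = MwpI.inf := by
    show smatMul A smatId i j = MwpI.inf
    unfold smatMul
    refine sum_eq_inf (Finset.mem_univ j) ?_
    rw [hij, MwpI.mul_inf_left]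
  exact sum_eq_inf (by simp) hpow

lemma jkc_noinf {n : ℕ} {P : Cmd n} {M : SMat n} (h : JKC P M) :
    ∀ i j, M i j ≠ MwpI.inf := by
  induction h with
  | assign j he =>
    intro r c
    unfold sAssignMat
    split
    · exact jke_noinf he r
    · split <;> decide
  | seq h1 h2 ih1 ih2 => exact smatMul_noinf ih1 ih2
  | ifte h1 h2 ih1 ih2 =>
    intro i j
    show MwpI.add _ _ ≠ MwpI.inf
    rw [Ne, MwpI.add_inf_iff]
    push_neg
    exact ⟨ih1 i j, ih2 i j⟩
  | loop l hc hcl hdiag ih =>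
    intro i j
    rw [Ne, MwpI.add_inf_iff]
    push_neg
    refine ⟨closure_noinf hcl ih i j, ?_⟩
    split <;> decide
  | whl hc hcl hdiag hnop ih => exact closure_noinf hcl ih

/-! ### Commutation of evaluation with matrix operations -/

lemma eval_matMul {n p : ℕ} (M N : Mat n p) (a : Fin p → Fin 3) :
    evalMat (matMul M N) a = smatMul (evalMat M a) (evalMat N a) := by
  funext i j
  show (∑ k : Fin n, fun a => MwpI.mul (M i k a) (N k j a)) a = _
  rw [Finset.sum_apply]
  rfl

lemma eval_matPow {n p : ℕ} (M : Mat n p) (a : Fin p → Fin 3) :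
    ∀ k, evalMat (matPow M k) a = smatPow (evalMat M a) k := by
  intro k
  induction k with
  | zero => rfl
  | succ k ih =>
    show evalMat (matMul M (matPow M k)) a = _
    rw [eval_matMul, ih]
    rfl

lemma eval_partialSum {n p : ℕ} (M : Mat n p) (a : Fin p → Fin 3) (N : ℕ) :
    evalMat (partialSum M N) a = spartialSum (evalMat M a) N := by
  funext i j
  show (∑ k ∈ Finset.range (N + 1), matPow M k) i j a = _
  rw [Finset.sum_apply, Finset.sum_apply, Finset.sum_apply, spartialSum_apply]
  refine Finset.sum_congr rfl fun k _ => ?_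
  have := eval_matPow M a k
  exact congrFun (congrFun this i) j

lemma eval_closure {n p : ℕ} {M Ms : Mat n p} (h : IsClosure M Ms) (a : Fin p → Fin 3) :
    SIsClosure (evalMat M a) (evalMat Ms a) := by
  obtain ⟨N, h1, h2⟩ := h
  refine ⟨N, ?_, ?_⟩
  · rw [h1, eval_partialSum]
  · rw [← eval_partialSum, ← eval_partialSum, h2]

/-! ### Expressions -/

lemma fin3_cases : ∀ x : Fin 3, x = 0 ∨ x = 1 ∨ x = 2 := by decide

lemma ederiv_jke {n : ℕ} {e : Expr n} {p : ℕ} {V : Vec n p} (h : EDeriv e p V)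
    (a : Fin p → Fin 3) : JKE e (fun r => V r a) := by
  cases h with
  | var i => exact JKE.e1 i
  | mul i j =>
    have : (fun r => emVec i j r a) = e2Vec (.mul i j) := by
      funext r
      unfold emVec e2Vec occursIn
      by_cases hi : r = i <;> by_cases hj : r = j <;> simp [hi, hj] <;> first | rfl | decide | (split <;> decide)
    rw [this]
    exact JKE.e2 _
  | add i j =>
    rcases fin3_cases (a 0) with h0 | h0 | h0
    · have : (fun r => eaVec i j r a) =
          (fun r => if r = i then MwpI.m else MwpI.zero) +
            pSmul (fun r => if r = j then MwpI.m else MwpI.zero) := by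
        funext r
        show _ = MwpI.add _ (MwpI.mul MwpI.p _)
        unfold eaVec eaLo eaHi
        rw [h0]
        by_cases hi : r = i <;> by_cases hj : r = j <;> simp [hi, hj] <;> first | rfl | decide | (split <;> decide)
      rw [this]
      exact JKE.e4add (JKE.e1 i) (JKE.e1 j)
    · have : (fun r => eaVec i j r a) =
          pSmul (fun r => if r = i then MwpI.m else MwpI.zero) +
            (fun r => if r = j then MwpI.m else MwpI.zero) := by
        funext r
        show _ = MwpI.add (MwpI.mul MwpI.p _) _
        unfold eaVec eaLo eaHi
        rw [h0]
        by_cases hi : r = i <;> by_cases hj : r = j <;> simp [hi, hj] <;> first | rfl | decide | (split <;> decide)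
      rw [this]
      exact JKE.e3add (JKE.e1 i) (JKE.e1 j)
    · have : (fun r => eaVec i j r a) = e2Vec (.add i j) := by
        funext r
        unfold eaVec eaLo eaHi e2Vec occursIn
        rw [h0]
        by_cases hi : r = i <;> by_cases hj : r = j <;> simp [hi, hj] <;> first | rfl | decide | (split <;> decide)
      rw [this]
      exact JKE.e2 _
  | sub i j =>
    rcases fin3_cases (a 0) with h0 | h0 | h0
    · have : (fun r => eaVec i j r a) =
          (fun r => if r = i then MwpI.m else MwpI.zero) +
            pSmul (fun r => if r = j then MwpI.m else MwpI.zero) := by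
        funext r
        show _ = MwpI.add _ (MwpI.mul MwpI.p _)
        unfold eaVec eaLo eaHi
        rw [h0]
        by_cases hi : r = i <;> by_cases hj : r = j <;> simp [hi, hj] <;> first | rfl | decide | (split <;> decide)
      rw [this]
      exact JKE.e4sub (JKE.e1 i) (JKE.e1 j)
    · have : (fun r => eaVec i j r a) =
          pSmul (fun r => if r = i then MwpI.m else MwpI.zero) +
            (fun r => if r = j then MwpI.m else MwpI.zero) := by
        funext r
        show _ = MwpI.add (MwpI.mul MwpI.p _) _
        unfold eaVec eaLo eaHi
        rw [h0]
        by_cases hi : r = i <;> by_cases hj : r = j <;> simp [hi, hj] <;> first | rfl | decide | (split <;> decide)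
      rw [this]
      exact JKE.e3sub (JKE.e1 i) (JKE.e1 j)
    · have : (fun r => eaVec i j r a) = e2Vec (.sub i j) := by
        funext r
        unfold eaVec eaLo eaHi e2Vec occursIn
        rw [h0]
        by_cases hi : r = i <;> by_cases hj : r = j <;> simp [hi, hj] <;> first | rfl | decide | (split <;> decide)
      rw [this]
      exact JKE.e2 _

/-! ### Backward direction -/

lemma deriv_jkc {n : ℕ} {P : Cmd n} {p : ℕ} {M : Mat n p} (h : Deriv P p M) :
    ∀ a : Fin p → Fin 3, (∀ i j, evalMat M a i j ≠ MwpI.inf) → JKC P (evalMat M a) := by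
  induction h with
  | @assign e pp V j he =>
    intro a _
    have heq : evalMat (assignMat j V) a = sAssignMat j (fun r => V r a) := by
      funext r c
      unfold evalMat assignMat sAssignMat
      by_cases hc : c = j <;> simp [hc]
    rw [heq]
    exact JKC.assign j (ederiv_jke he a)
  | @seq c₁ c₂ p₁ p₂ M₁ M₂ h1 h2 ih1 ih2 =>
    intro a hno
    rw [eval_matMul] at hno ⊢
    set aL : Fin p₁ → Fin 3 := fun i => a (Fin.castAdd p₂ i) with haL
    set aR : Fin p₂ → Fin 3 := fun i => a (Fin.natAdd p₁ i) with haR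
    have hL : evalMat (matLiftL M₁ : Mat n (p₁ + p₂)) a = evalMat M₁ aL := rfl
    have hR : evalMat (matLiftR M₂ : Mat n (p₁ + p₂)) a = evalMat M₂ aR := rfl
    rw [hL, hR] at hno ⊢
    have hn1 : ∀ i j, evalMat M₁ aL i j ≠ MwpI.inf := by
      intro i j hij
      apply hno i j
      unfold smatMul
      refine sum_eq_inf (Finset.mem_univ j) ?_
      rw [hij, MwpI.mul_inf_left]
    have hn2 : ∀ i j, evalMat M₂ aR i j ≠ MwpI.inf := by
      intro i j hij
      apply hno i j
      unfold smatMul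
      refine sum_eq_inf (Finset.mem_univ i) ?_
      rw [hij, MwpI.mul_inf_right]
    exact JKC.seq (ih1 aL hn1) (ih2 aR hn2)
  | @ifte c₁ c₂ p₁ p₂ M₁ M₂ h1 h2 ih1 ih2 =>
    intro a hno
    set aL : Fin p₁ → Fin 3 := fun i => a (Fin.castAdd p₂ i) with haL
    set aR : Fin p₂ → Fin 3 := fun i => a (Fin.natAdd p₁ i) with haR
    have heq : evalMat (matLiftL M₁ + matLiftR M₂) a =
        fun i j => MwpI.add (evalMat M₁ aL i j) (evalMat M₂ aR i j) := rfl
    rw [heq] at hno ⊢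
    have hn1 : ∀ i j, evalMat M₁ aL i j ≠ MwpI.inf := fun i j hij =>
      hno i j ((MwpI.add_inf_iff _ _).mpr (Or.inl hij))
    have hn2 : ∀ i j, evalMat M₂ aR i j ≠ MwpI.inf := fun i j hij =>
      hno i j ((MwpI.add_inf_iff _ _).mpr (Or.inr hij))
    exact JKC.ifte (ih1 aL hn1) (ih2 aR hn2)
  | @loop c pp M Ms l hc hcl ih =>
    intro a hno
    have hclA := eval_closure hcl a
    have hno' : ∀ i j, MwpI.add
        (MwpI.add (evalMat Ms a i j)
          (if i = j ∧ evalMat Ms a j j ≠ MwpI.m then MwpI.inf else MwpI.zero))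
        (if i = l ∧ (∃ i', evalMat Ms a i' j = MwpI.p) then MwpI.p else MwpI.zero)
        ≠ MwpI.inf := hno
    have hdiag : ∀ j, evalMat Ms a j j = MwpI.m := by
      intro j
      by_contra hj
      apply hno' j j
      rw [if_pos ⟨rfl, hj⟩, MwpI.add_add_inf]
    have hAsno : ∀ i j, evalMat Ms a i j ≠ MwpI.inf := by
      intro i j hij
      apply hno' i j
      rw [hij, MwpI.add_inf_left]
    have hAno := closure_noinf_rev hclA hAsno
    have hfin : evalMat (loopOut l Ms) a = fun i j =>
        MwpI.add (evalMat Ms a i j)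
          (if i = l ∧ (∃ i', evalMat Ms a i' j = MwpI.p) then MwpI.p else MwpI.zero) := by
      funext i j
      show MwpI.add (MwpI.add (evalMat Ms a i j)
          (if i = j ∧ evalMat Ms a j j ≠ MwpI.m then MwpI.inf else MwpI.zero)) _ = _
      have hcond : ¬(i = j ∧ evalMat Ms a j j ≠ MwpI.m) := fun h => h.2 (hdiag j)
      rw [if_neg hcond, MwpI.add_zero']
      rfl
    rw [hfin]
    exact JKC.loop l (ih a hAno) hclA hdiag
  | @whl c pp M Ms hc hcl ih =>
    intro a hno
    have hclA := eval_closure hcl a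
    have hno' : ∀ i j, MwpI.add
        (MwpI.add (evalMat Ms a i j)
          (if i = j ∧ evalMat Ms a j j ≠ MwpI.m then MwpI.inf else MwpI.zero))
        (if evalMat Ms a i j = MwpI.p then MwpI.inf else MwpI.zero)
        ≠ MwpI.inf := hno
    have hdiag : ∀ j, evalMat Ms a j j = MwpI.m := by
      intro j
      by_contra hj
      apply hno' j j
      rw [if_pos ⟨rfl, hj⟩, MwpI.add_add_inf]
    have hnop : ∀ i j, evalMat Ms a i j ≠ MwpI.p := by
      intro i j hij
      apply hno' i j
      rw [if_pos hij, MwpI.add_inf_right]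
    have hAsno : ∀ i j, evalMat Ms a i j ≠ MwpI.inf := by
      intro i j hij
      apply hno' i j
      rw [hij, MwpI.add_inf_left]
    have hAno := closure_noinf_rev hclA hAsno
    have hfin : evalMat (whileOut Ms) a = evalMat Ms a := by
      funext i j
      show MwpI.add (MwpI.add (evalMat Ms a i j)
          (if i = j ∧ evalMat Ms a j j ≠ MwpI.m then MwpI.inf else MwpI.zero))
          (if evalMat Ms a i j = MwpI.p then MwpI.inf else MwpI.zero) = _
      have hcond : ¬(i = j ∧ evalMat Ms a j j ≠ MwpI.m) := fun h => h.2 (hdiag j)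
      rw [if_neg (hnop i j), if_neg hcond, MwpI.add_zero', MwpI.add_zero']
    rw [hfin]
    exact JKC.whl (ih a hAno) hclA hdiag hnop

end Aux

/-- (Adequacy.)  Let `P` be a program with `⊢ P : M` in the deterministic calculus,
`M` an `n × n` matrix over `{0,1,2}^p → mwp^∞`.  Then for every assignment
`a ∈ {0,1,2}^p`, the judgement `⊢_JK P : M[a]` is derivable in the original
Jones–Kristiansen calculus if and only if no entry of `M[a]` equals `∞`. -/
theorem adequacy {n : ℕ} (P : Cmd n) {p : ℕ} {M : Mat n p}
    (h : Deriv P p M) (a : Fin p → Fin 3) :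
    JKC P (evalMat M a) ↔ ∀ i j, evalMat M a i j ≠ MwpI.inf := by
  constructor
  · exact fun hjk => jkc_noinf hjk
  · exact deriv_jkc h a
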